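/- arXiv:0810.0069 — 6 statements merged into one kernel-verified Lean document; each statement's English description precedes it below -/
import Mathlib

section
/- Let S be a commutative ring and let a, b ∈ S. If a is not a zero divisor in S, and the image of b in S/aS is not a zero divisor in S/aS, then the image of a in S/bS is not a zero divisor in S/bS. -/
theorem stmt_0 {S : Type*} [CommRing S] (a b : S)
    (ha : ∀ x : S, a * x = 0 → x = 0)
    (hb : ∀ y : S ⧸ Ideal.span ({a} : Set S),
      (Ideal.Quotient.mk (Ideal.span ({a} : Set S)) b) * y = 0 → y = 0) :
    ∀ z : S ⧸ Ideal.span ({b} : Set S),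
      (Ideal.Quotient.mk (Ideal.span ({b} : Set S)) a) * z = 0 → z = 0 := by
  intro z hz
  obtain ⟨x, rfl⟩ := Ideal.Quotient.mk_surjective z
  rw [← map_mul, Ideal.Quotient.eq_zero_iff_mem, Ideal.mem_span_singleton] at hz
  obtain ⟨y, hy⟩ := hz
  have hy0 : (Ideal.Quotient.mk (Ideal.span ({a} : Set S)) b) *
      (Ideal.Quotient.mk (Ideal.span ({a} : Set S)) y) = 0 := by
    rw [← map_mul, Ideal.Quotient.eq_zero_iff_mem, Ideal.mem_span_singleton]
    exact ⟨x, hy.symm.trans (by ring)⟩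
  have := hb _ hy0
  rw [Ideal.Quotient.eq_zero_iff_mem, Ideal.mem_span_singleton] at this
  obtain ⟨c, rfl⟩ := this
  have hx : x = b * c := by
    have : a * (x - b * c) = 0 := by
      linear_combination hy
    exact sub_eq_zero.mp (ha _ this)
  rw [hx, Ideal.Quotient.eq_zero_iff_mem, Ideal.mem_span_singleton]
  exact ⟨c, rfl⟩
end

section
/- Let A be an associative unital algebra over a commutative ring R, δ ∈ R, and let X ∈ A be invertible, Y ∈ A invertible, e ∈ A, with X − X⁻¹ = δ(1 − e). Set Y′ := XYX. Then for every integer p ≥ 0: X Y^p = Y′^p X − δ Σ_{s=1}^{p} Y′^s Y^{p−s} + δ Σ_{s=1}^{p} Y′^s e Y^{p−s}. -/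
theorem stmt_5 {R A : Type*} [CommRing R] [Ring A] [Algebra R A]
    (δ : R) (X Y : Aˣ) (e : A)
    (hskein : (X : A) - (↑X⁻¹ : A) = δ • ((1 : A) - e))
    (Y' : A) (hY' : Y' = (X : A) * (Y : A) * (X : A)) :
    ∀ p : ℕ,
      (X : A) * (Y : A) ^ p =
        Y' ^ p * (X : A)
          - δ • ∑ s ∈ Finset.Icc 1 p, Y' ^ s * (Y : A) ^ (p - s)
          + δ • ∑ s ∈ Finset.Icc 1 p, Y' ^ s * e * (Y : A) ^ (p - s) := by
  have hXinv : (↑X⁻¹ : A) = (X : A) - δ • ((1 : A) - e) := by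
    rw [← hskein, sub_sub_cancel]
  have hXY : (X : A) * (Y : A) = Y' * (X : A) - δ • Y' + δ • (Y' * e) := by
    have h1 : (X : A) * (Y : A) = Y' * (↑X⁻¹ : A) := by
      rw [hY', mul_assoc, Units.mul_inv, mul_one]
    rw [h1, hXinv, mul_sub, mul_smul_comm, mul_sub, mul_one, smul_sub]
    abel
  intro p
  induction p with
  | zero => simp
  | succ p ih =>
    have hs1 : ∀ s ∈ Finset.Icc 1 p,
        Y' ^ s * (Y : A) ^ (p + 1 - s) = (Y' ^ s * (Y : A) ^ (p - s)) * (Y : A) := by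
      intro s hs
      rw [Finset.mem_Icc] at hs
      rw [show p + 1 - s = (p - s) + 1 by omega, pow_succ, mul_assoc]
    have hs2 : ∀ s ∈ Finset.Icc 1 p,
        Y' ^ s * e * (Y : A) ^ (p + 1 - s) = (Y' ^ s * e * (Y : A) ^ (p - s)) * (Y : A) := by
      intro s hs
      rw [Finset.mem_Icc] at hs
      rw [show p + 1 - s = (p - s) + 1 by omega, pow_succ]
      simp [mul_assoc]
    rw [Finset.sum_Icc_succ_top (Nat.succ_le_succ (Nat.zero_le p)),
        Finset.sum_Icc_succ_top (Nat.succ_le_succ (Nat.zero_le p)),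
        Finset.sum_congr rfl hs1, Finset.sum_congr rfl hs2, ← Finset.sum_mul,
        ← Finset.sum_mul]
    have hL : (X : A) * (Y : A) ^ (p + 1) = ((X : A) * (Y : A) ^ p) * (Y : A) := by
      rw [pow_succ, ← mul_assoc]
    rw [hL, ih]
    simp only [Nat.sub_self, pow_zero, mul_one]
    rw [add_mul, sub_mul, mul_assoc (Y' ^ p), hXY]
    rw [smul_mul_assoc, smul_mul_assoc, pow_succ]
    rw [mul_add, mul_sub, mul_smul_comm, mul_smul_comm, ← mul_assoc, smul_add, smul_add]
    simp only [← mul_assoc]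
    abel
end

section
/- Let A be an associative unital algebra over a commutative ring R, let k ≥ 1, let q₀, …, q_{k-1} ∈ R with q₀ invertible, and let A₀, …, A_{k-1} ∈ R. Suppose y ∈ A is invertible with y^k = Σ_{i=0}^{k-1} q_i y^i, and e ∈ A satisfies e y^m e = A_m e for all 0 ≤ m ≤ k−1. Then for every integer p (positive or negative) there exists a scalar A_p ∈ R such that e y^p e = A_p e. -/
theorem stmt_6 {R A : Type*} [CommRing R] [Ring A] [Algebra R A]
    (k : ℕ) (hk : 1 ≤ k) (q : ℕ → R) (u : Rˣ) (hu : (u : R) = q 0)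
    (Acoef : ℕ → R) (y : Aˣ) (e : A)
    (hy : (y : A) ^ k = ∑ i ∈ Finset.range k, q i • (y : A) ^ i)
    (he : ∀ m : ℕ, m < k → e * (y : A) ^ m * e = Acoef m • e) :
    ∀ p : ℤ, ∃ c : R, e * (↑(y ^ p) : A) * e = c • e := by
  set S : Submodule R A := Submodule.span R (Set.range fun i : Fin k => (y : A) ^ (i : ℕ))
    with hS
  have hmem : ∀ i : ℕ, i < k → (y : A) ^ i ∈ S := fun i hi =>
    Submodule.subset_span ⟨⟨i, hi⟩, rfl⟩
  have h1 : (1 : A) ∈ S := by simpa using hmem 0 hk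
  -- the span contains all y^i appearing in hy's RHS
  have hsumS : ∀ x ∈ S, (y : A) * x ∈ S := by
    intro x hx
    induction hx using Submodule.span_induction with
    | mem x hx =>
      obtain ⟨i, rfl⟩ := hx
      by_cases h : (i : ℕ) + 1 < k
      · rw [← pow_succ']
        exact hmem _ h
      · have hik : (i : ℕ) + 1 = k := by omega
        rw [← pow_succ', hik, hy]
        exact Submodule.sum_mem _ fun j hj =>
          Submodule.smul_mem _ _ (hmem j (Finset.mem_range.mp hj))
    | zero => simp
    | add a b _ _ ha hb => simpa [mul_add] using Submodule.add_mem _ ha hb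
    | smul r a _ ha => rw [mul_smul_comm]; exact Submodule.smul_mem _ _ ha
  have hinv : (↑y⁻¹ : A) ∈ S := by
    have hk' : k - 1 + 1 = k := by omega
    have h2 : (↑y⁻¹ : A) * (y : A) ^ k = (y : A) ^ (k - 1) := by
      have : (y : A) ^ k = (y : A) * (y : A) ^ (k - 1) := by
        rw [← pow_succ']; congr 1; omega
      rw [this, ← mul_assoc]
      simp
    rw [hy] at h2
    have h3 : (↑y⁻¹ : A) * ∑ i ∈ Finset.range k, q i • (y : A) ^ i
        = (∑ i ∈ Finset.range (k - 1), q (i + 1) • (y : A) ^ i) + q 0 • (↑y⁻¹ : A) := by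
      rw [← hk', Finset.sum_range_succ', mul_add, Finset.mul_sum]
      congr 1
      · refine Finset.sum_congr rfl fun i _ => ?_
        rw [mul_smul_comm, pow_succ', ← mul_assoc]
        simp
      · rw [mul_smul_comm, pow_zero, mul_one]
    rw [h3] at h2
    have h4 : q 0 • (↑y⁻¹ : A)
        = (y : A) ^ (k - 1) - ∑ i ∈ Finset.range (k - 1), q (i + 1) • (y : A) ^ i := by
      rw [eq_sub_iff_add_eq, add_comm, h2]
    have h5 : (↑y⁻¹ : A) = (↑u⁻¹ : R) •
        ((y : A) ^ (k - 1) - ∑ i ∈ Finset.range (k - 1), q (i + 1) • (y : A) ^ i) := by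
      rw [← h4, ← hu, smul_smul, Units.inv_mul, one_smul]
    rw [h5]
    refine Submodule.smul_mem _ _ (Submodule.sub_mem _ (hmem _ (by omega)) ?_)
    exact Submodule.sum_mem _ fun j hj =>
      Submodule.smul_mem _ _ (hmem j (by have := Finset.mem_range.mp hj; omega))
  have hinvS : ∀ x ∈ S, (↑y⁻¹ : A) * x ∈ S := by
    intro x hx
    induction hx using Submodule.span_induction with
    | mem x hx =>
      obtain ⟨i, rfl⟩ := hx
      rcases Nat.eq_zero_or_pos (i : ℕ) with h0 | hpos
      · simpa [h0] using hinv
      · show (↑y⁻¹ : A) * (y : A) ^ (i : ℕ) ∈ S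
        have : (y : A) ^ (i : ℕ) = (y : A) * (y : A) ^ ((i : ℕ) - 1) := by
          rw [← pow_succ']
          congr 1
          omega
        rw [this, ← mul_assoc]
        simpa using hmem _ (by omega : (i : ℕ) - 1 < k)
    | zero => simp
    | add a b _ _ ha hb => simpa [mul_add] using Submodule.add_mem _ ha hb
    | smul r a _ ha => rw [mul_smul_comm]; exact Submodule.smul_mem _ _ ha
  have hpow : ∀ p : ℤ, (↑(y ^ p) : A) ∈ S := by
    intro p
    induction p using Int.induction_on with
    | zero => simpa using h1
    | succ n ih =>
      have : y ^ ((n : ℤ) + 1) = y * y ^ (n : ℤ) := by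
        rw [add_comm, zpow_add, zpow_one]
      rw [this]
      exact hsumS _ ih
    | pred n ih =>
      have : y ^ (-(n : ℤ) - 1) = y⁻¹ * y ^ (-(n : ℤ)) := by
        rw [sub_eq_add_neg, add_comm, zpow_add, zpow_neg_one]
      rw [this]
      exact hinvS _ ih
  -- the target property forms a submodule
  set T : Submodule R A :=
    { carrier := {x | ∃ c : R, e * x * e = c • e}
      zero_mem' := ⟨0, by simp⟩
      add_mem' := by
        rintro a b ⟨c1, hc1⟩ ⟨c2, hc2⟩
        exact ⟨c1 + c2, by rw [mul_add, add_mul, hc1, hc2, add_smul]⟩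
      smul_mem' := by
        rintro r a ⟨c, hc⟩
        exact ⟨r * c, by rw [mul_smul_comm, smul_mul_assoc, hc, smul_smul]⟩ } with hT
  have hST : S ≤ T := by
    rw [hS, Submodule.span_le]
    rintro _ ⟨i, rfl⟩
    exact ⟨Acoef i, he i i.isLt⟩
  exact fun p => hST (hpow p)
end

section
/- Let R be a commutative ring, V an R-module, Y an invertible R-linear endomorphism of V, and N an R-linear endomorphism of V. Fix v₀ ∈ V and set v_s := Y^s v₀ for all s ∈ ℤ. Assume: N v₀ = N v₁ = 0, the image of the commutator [N, Y] = NY − YN is contained in R·v₁, and the image of [N, Y⁻¹] is contained in R·v₀. Then for all l ≥ 1, N v_l lies in the R-span of {v₁, v₂, …, v_{l−1}}, and for all m ≥ 0, N v_{−m} lies in the R-span of {v₀, v_{−1}, …, v_{−(m−1)}}. -/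
theorem stmt_14 {R V : Type*} [CommRing R] [AddCommGroup V] [Module R V]
    (Y : (Module.End R V)ˣ) (N : Module.End R V) (v0 : V)
    (v : ℤ → V) (hv : ∀ s : ℤ, v s = (↑(Y ^ s) : Module.End R V) v0)
    (h0 : N (v 0) = 0) (h1 : N (v 1) = 0)
    (hY : ∀ x : V, ∃ c : R, (N * (↑Y : Module.End R V) - (↑Y : Module.End R V) * N) x = c • v 1)
    (hYinv : ∀ x : V, ∃ c : R,
      (N * (↑Y⁻¹ : Module.End R V) - (↑Y⁻¹ : Module.End R V) * N) x = c • v 0) :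
    (∀ l : ℤ, 1 ≤ l →
      N (v l) ∈ Submodule.span R {x : V | ∃ s : ℤ, 1 ≤ s ∧ s ≤ l - 1 ∧ x = v s}) ∧
    (∀ m : ℤ, 0 ≤ m →
      N (v (-m)) ∈ Submodule.span R {x : V | ∃ s : ℤ, 0 ≤ s ∧ s ≤ m - 1 ∧ x = v (-s)}) := by
  have hstep : ∀ s : ℤ, (↑Y : Module.End R V) (v s) = v (s + 1) := by
    intro s
    rw [hv, hv, add_comm, zpow_add, zpow_one, Units.val_mul, Module.End.mul_apply]
  have hstep' : ∀ s : ℤ, (↑Y⁻¹ : Module.End R V) (v s) = v (s - 1) := by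
    intro s
    rw [hv, hv, sub_eq_add_neg, add_comm, zpow_add, zpow_neg_one, Units.val_mul,
      Module.End.mul_apply]
  have hcomm : ∀ x : V, ∃ c : R,
      N ((↑Y : Module.End R V) x) = (↑Y : Module.End R V) (N x) + c • v 1 := by
    intro x
    obtain ⟨c, hc⟩ := hY x
    simp only [LinearMap.sub_apply, Module.End.mul_apply] at hc
    exact ⟨c, sub_eq_iff_eq_add'.mp hc⟩
  have hcomm' : ∀ x : V, ∃ c : R,
      N ((↑Y⁻¹ : Module.End R V) x) = (↑Y⁻¹ : Module.End R V) (N x) + c • v 0 := by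
    intro x
    obtain ⟨c, hc⟩ := hYinv x
    simp only [LinearMap.sub_apply, Module.End.mul_apply] at hc
    exact ⟨c, sub_eq_iff_eq_add'.mp hc⟩
  have pos : ∀ n : ℕ, N (v ((n : ℤ) + 1)) ∈
      Submodule.span R {x : V | ∃ s : ℤ, 1 ≤ s ∧ s ≤ (n : ℤ) ∧ x = v s} := by
    intro n
    induction n with
    | zero =>
        have : ((0 : ℕ) : ℤ) + 1 = 1 := by norm_num
        rw [this, h1]
        exact Submodule.zero_mem _
    | succ n ih =>
        have hv' : v (((n + 1 : ℕ) : ℤ) + 1) = (↑Y : Module.End R V) (v ((n : ℤ) + 1)) := by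
          rw [hstep]
          norm_num
        obtain ⟨c, hc⟩ := hcomm (v ((n : ℤ) + 1))
        rw [hv', hc]
        apply Submodule.add_mem
        · have key : Submodule.map (↑Y : Module.End R V)
              (Submodule.span R {x : V | ∃ s : ℤ, 1 ≤ s ∧ s ≤ (n : ℤ) ∧ x = v s}) ≤
              Submodule.span R {x : V | ∃ s : ℤ, 1 ≤ s ∧ s ≤ ((n + 1 : ℕ) : ℤ) ∧ x = v s} := by
            rw [Submodule.map_span, Submodule.span_le]
            rintro _ ⟨x, ⟨s, h1s, hsn, rfl⟩, rfl⟩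
            exact Submodule.subset_span ⟨s + 1, by omega, by push_cast; omega, hstep s⟩
          exact key ⟨_, ih, rfl⟩
        · exact Submodule.smul_mem _ _
            (Submodule.subset_span ⟨1, le_refl 1, by push_cast; omega, rfl⟩)
  have neg : ∀ n : ℕ, N (v (-(n : ℤ))) ∈
      Submodule.span R {x : V | ∃ s : ℤ, 0 ≤ s ∧ s ≤ (n : ℤ) - 1 ∧ x = v (-s)} := by
    intro n
    induction n with
    | zero =>
        have : -((0 : ℕ) : ℤ) = 0 := by norm_num
        rw [this, h0]
        exact Submodule.zero_mem _
    | succ n ih =>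
        have hv' : v (-((n + 1 : ℕ) : ℤ)) = (↑Y⁻¹ : Module.End R V) (v (-(n : ℤ))) := by
          rw [hstep']
          norm_num
          ring_nf
        obtain ⟨c, hc⟩ := hcomm' (v (-(n : ℤ)))
        rw [hv', hc]
        apply Submodule.add_mem
        · have key : Submodule.map (↑Y⁻¹ : Module.End R V)
              (Submodule.span R {x : V | ∃ s : ℤ, 0 ≤ s ∧ s ≤ (n : ℤ) - 1 ∧ x = v (-s)}) ≤
              Submodule.span R
                {x : V | ∃ s : ℤ, 0 ≤ s ∧ s ≤ ((n + 1 : ℕ) : ℤ) - 1 ∧ x = v (-s)} := by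
            rw [Submodule.map_span, Submodule.span_le]
            rintro _ ⟨x, ⟨s, h0s, hsn, rfl⟩, rfl⟩
            refine Submodule.subset_span ⟨s + 1, by omega, by push_cast; omega, ?_⟩
            rw [hstep']
            ring_nf
          exact key ⟨_, ih, rfl⟩
        · refine Submodule.smul_mem _ _
            (Submodule.subset_span ⟨0, le_refl 0, by push_cast; omega, by norm_num⟩)
  constructor
  · intro l hl
    have hn : (((l - 1).toNat : ℤ)) = l - 1 := Int.toNat_of_nonneg (by omega)
    have := pos (l - 1).toNat
    rw [hn] at this
    simpa using this
  · intro m hm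
    have hn : ((m.toNat : ℤ)) = m := Int.toNat_of_nonneg hm
    have := neg m.toNat
    rw [hn] at this
    exact this
end

section
/- Let R be a commutative ring, V an R-module, Y an invertible R-linear endomorphism of V, and N an R-linear endomorphism of V. Fix v₀ ∈ V, set v_s := Y^s v₀ for s ∈ ℤ, and fix k ≥ 2. Assume: (a) N v₀ = N v₁ = 0; (b) im([N, Y]) ⊆ R·v₁ and im([N, Y⁻¹]) ⊆ R·v₀; (c) for every integer l, the family (v_l, v_{l+1}, …, v_{l+k−1}) is a basis of V. Then N v_i = 0 for all 0 ≤ i ≤ k−1; consequently N = 0. -/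
theorem stmt_15 {R V : Type*} [CommRing R] [AddCommGroup V] [Module R V]
    (Y : (Module.End R V)ˣ) (N : Module.End R V) (v0 : V) (k : ℕ) (hk : 2 ≤ k)
    (v : ℤ → V) (hv : ∀ s : ℤ, v s = (↑(Y ^ s) : Module.End R V) v0)
    (h0 : N (v 0) = 0) (h1 : N (v 1) = 0)
    (hY : ∀ x : V, ∃ c : R, (N * (↑Y : Module.End R V) - (↑Y : Module.End R V) * N) x = c • v 1)
    (hYinv : ∀ x : V, ∃ c : R,
      (N * (↑Y⁻¹ : Module.End R V) - (↑Y⁻¹ : Module.End R V) * N) x = c • v 0)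
    (hbasis : ∀ l : ℤ,
      LinearIndependent R (fun i : Fin k => v (l + (i : ℤ))) ∧
      Submodule.span R (Set.range (fun i : Fin k => v (l + (i : ℤ)))) = ⊤) :
    (∀ i : ℕ, i < k → N (v (i : ℤ)) = 0) ∧ N = 0 := by
  -- Y shifts v
  have hvY : ∀ s : ℤ, (↑Y : Module.End R V) (v s) = v (s + 1) := by
    intro s
    rw [hv s, hv (s + 1)]
    have h : (Y : Module.End R V) * ↑(Y ^ s) = ↑(Y ^ (s + 1)) := by
      rw [add_comm, zpow_add, zpow_one, Units.val_mul]
    calc (↑Y : Module.End R V) ((↑(Y ^ s) : Module.End R V) v0)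
        = ((↑Y : Module.End R V) * ↑(Y ^ s)) v0 := rfl
      _ = (↑(Y ^ (s + 1)) : Module.End R V) v0 := by rw [h]
  -- step recursion
  have hstep : ∀ s : ℕ, ∃ cc : R,
      N (v ((s : ℤ) + 1)) = cc • v 1 + (↑Y : Module.End R V) (N (v (s : ℤ))) := by
    intro s
    obtain ⟨cc, h⟩ := hY (v (s : ℤ))
    simp only [LinearMap.sub_apply, Module.End.mul_apply] at h
    rw [hvY] at h
    exact ⟨cc, eq_add_of_sub_eq h⟩
  choose c hc using hstep
  -- formula
  have key : ∀ s : ℕ, N (v (s : ℤ)) =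
      ∑ j ∈ Finset.Ico 1 s, c j • v ((s : ℤ) - (j : ℤ)) := by
    intro s
    induction s with
    | zero => simpa using h0
    | succ s ih =>
      rcases Nat.eq_zero_or_pos s with hs | hs
      · subst hs
        simpa using h1
      · have h := hc s
        rw [ih, map_sum] at h
        have hterm : ∀ j ∈ Finset.Ico 1 s,
            (↑Y : Module.End R V) (c j • v ((s : ℤ) - (j : ℤ)))
              = c j • v (((s : ℤ) + 1) - (j : ℤ)) := by
          intro j _
          rw [map_smul, hvY, show (s : ℤ) - (j : ℤ) + 1 = ((s : ℤ) + 1) - (j : ℤ) by ring]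
        rw [Finset.sum_congr rfl hterm] at h
        push_cast
        rw [h, Finset.sum_Ico_succ_top (a := 1) (b := s) (by omega), add_comm]
        congr 1
        rw [show ((s : ℤ) + 1) - (s : ℤ) = 1 by ring]
  -- basis and coordinate functional
  set b : Module.Basis (Fin k) R V := Module.Basis.mk (hbasis 0).1 (hbasis 0).2.ge with hbdef
  set ik1 : Fin k := ⟨k - 1, by omega⟩ with hik1def
  set φ : V →ₗ[R] R := b.coord ik1 with hφdef
  have hφ : ∀ t : ℤ, 0 ≤ t → t < (k : ℤ) →
      φ (v t) = if t = (k : ℤ) - 1 then 1 else 0 := by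
    intro t ht htk
    obtain ⟨n, rfl⟩ : ∃ n : ℕ, t = (n : ℤ) := ⟨t.toNat, (Int.toNat_of_nonneg ht).symm⟩
    have hnk : n < k := by exact_mod_cast htk
    have hb : b ⟨n, hnk⟩ = v (n : ℤ) := by
      rw [hbdef, Module.Basis.mk_apply]
      simp
    rw [← hb, hφdef, Module.Basis.coord_apply, Module.Basis.repr_self, Finsupp.single_apply]
    have hiff : ((⟨n, hnk⟩ : Fin k) = ik1) ↔ ((n : ℤ) = (k : ℤ) - 1) := by
      rw [hik1def, Fin.mk.injEq]
      omega
    by_cases hcase : (n : ℤ) = (k : ℤ) - 1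
    · rw [if_pos (hiff.mpr hcase), if_pos hcase]
    · rw [if_neg (fun hcon => hcase (hiff.mp hcon)), if_neg hcase]
  -- vanishing of coefficients
  have hcz : ∀ m : ℕ, 1 ≤ m → c m = 0 := by
    intro m
    induction m using Nat.strong_induction_on with
    | _ m ih =>
      intro hm
      have hsmall : ∀ t : ℕ, t ≤ m + (k - 2) → φ (N (v (t : ℤ))) = 0 := by
        intro t htle
        rw [key t, map_sum]
        apply Finset.sum_eq_zero
        intro j hj
        obtain ⟨hj1, hj2⟩ := Finset.mem_Ico.mp hj
        rw [map_smul]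
        rcases lt_or_ge j m with hjm | hjm
        · rw [ih j hjm hj1]; simp
        · rw [hφ _ (by omega) (by omega), if_neg (by omega)]
          simp
      set s : ℕ := m + (k - 1) with hsdef
      have hψ0 : φ (N (v (s : ℤ))) = 0 := by
        set ψ : V →ₗ[R] R := φ ∘ₗ N with hψdef
        have hker : Submodule.span R
            (Set.range (fun i : Fin k => v ((m : ℤ) - 1 + (i : ℤ)))) ≤ LinearMap.ker ψ := by
          rw [Submodule.span_le]
          rintro _ ⟨i, rfl⟩
          have hidx : (m : ℤ) - 1 + ((i : ℕ) : ℤ) = ((m - 1 + (i : ℕ) : ℕ) : ℤ) := by omega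
          simp only [SetLike.mem_coe, LinearMap.mem_ker, hψdef, LinearMap.comp_apply]
          rw [hidx]
          exact hsmall _ (by omega)
        have htop : LinearMap.ker ψ = ⊤ := top_unique ((hbasis ((m : ℤ) - 1)).2 ▸ hker)
        have hz : ψ (v (s : ℤ)) = 0 :=
          (LinearMap.mem_ker).mp (htop ▸ Submodule.mem_top)
        simpa [hψdef] using hz
      have hψm : φ (N (v (s : ℤ))) = c m := by
        rw [key s, map_sum]
        rw [Finset.sum_eq_single_of_mem m (Finset.mem_Ico.mpr ⟨hm, by omega⟩)]
        · rw [map_smul, show (s : ℤ) - (m : ℤ) = (k : ℤ) - 1 by omega,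
            hφ _ (by omega) (by omega), if_pos rfl]
          simp
        · intro j hj hne
          obtain ⟨hj1, hj2⟩ := Finset.mem_Ico.mp hj
          rw [map_smul]
          rcases lt_or_ge j m with hjm | hjm
          · rw [ih j hjm hj1]; simp
          · have hjm' : m < j := by omega
            rw [hφ _ (by omega) (by omega), if_neg (by omega)]
            simp
      rw [hψm] at hψ0
      exact hψ0
  -- conclusion
  have hN0 : ∀ t : ℕ, N (v (t : ℤ)) = 0 := by
    intro t
    rw [key t]
    apply Finset.sum_eq_zero
    intro j hj
    rw [hcz j (Finset.mem_Ico.mp hj).1]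
    simp
  refine ⟨fun i _ => hN0 i, ?_⟩
  apply LinearMap.ext
  intro x
  have hx : x ∈ Submodule.span R (Set.range (fun i : Fin k => v ((0 : ℤ) + (i : ℤ)))) := by
    rw [(hbasis 0).2]; trivial
  have hker : Submodule.span R (Set.range (fun i : Fin k => v ((0 : ℤ) + (i : ℤ))))
      ≤ LinearMap.ker N := by
    rw [Submodule.span_le]
    rintro _ ⟨i, rfl⟩
    simp only [SetLike.mem_coe, LinearMap.mem_ker, zero_add]
    exact hN0 i
  simpa using hker hx
end

section
/- Let A be an associative unital algebra over a commutative ring R with δ ∈ R, let X, Y ∈ A be invertible, e ∈ A, with X − X⁻¹ = δ(1 − e), and set Y′ := XYX. Then for all integers p ≥ 0: X Y^{−p} = Y′^{−p} X + δ Σ_{s=1}^{p} Y′^{s−p} Y^{−s} − δ Σ_{s=1}^{p} Y′^{s−p} e Y^{−s}. -/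
theorem stmt_17 {R A : Type*} [CommRing R] [Ring A] [Algebra R A]
    (δ : R) (X Y : Aˣ) (e : A)
    (hskein : (X : A) - (↑X⁻¹ : A) = δ • ((1 : A) - e))
    (Y' : Aˣ) (hY' : Y' = X * Y * X) :
    ∀ p : ℕ,
      (X : A) * (↑(Y ^ (-(p : ℤ))) : A) =
        (↑(Y' ^ (-(p : ℤ))) : A) * (X : A)
          + δ • ∑ s ∈ Finset.Icc 1 p,
              (↑(Y' ^ ((s : ℤ) - (p : ℤ))) : A) * (↑(Y ^ (-(s : ℤ))) : A)
          - δ • ∑ s ∈ Finset.Icc 1 p,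
              (↑(Y' ^ ((s : ℤ) - (p : ℤ))) : A) * e * (↑(Y ^ (-(s : ℤ))) : A) := by
  have hinv : (↑(Y'⁻¹) : A) * X = ↑X⁻¹ * ↑Y⁻¹ := by
    subst hY'
    have : (X * Y * X)⁻¹ * X = X⁻¹ * Y⁻¹ := by group
    calc (↑(X*Y*X)⁻¹ : A) * X = ↑((X*Y*X)⁻¹ * X) := by rw [Units.val_mul]
    _ = ↑(X⁻¹ * Y⁻¹) := by rw [this]
    _ = ↑X⁻¹ * ↑Y⁻¹ := Units.val_mul _ _
  have hX : (X : A) = ↑X⁻¹ + δ • ((1:A) - e) := by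
    rw [← hskein]; abel
  have key : (X : A) * ↑Y⁻¹ = (↑(Y'⁻¹) : A) * X + δ • (↑Y⁻¹ : A) - δ • (e * ↑Y⁻¹) := by
    rw [hinv, hX, add_mul, smul_mul_assoc, sub_mul, one_mul, smul_sub]
    abel
  -- auxiliary range-indexed version
  have aux : ∀ p : ℕ,
      (X : A) * (↑(Y ^ (-(p : ℤ))) : A) =
        (↑(Y' ^ (-(p : ℤ))) : A) * (X : A)
          + δ • ∑ i ∈ Finset.range p,
              (↑(Y' ^ ((1 + i : ℕ) - (p : ℤ))) : A) * (↑(Y ^ (-((1 + i : ℕ) : ℤ))) : A)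
          - δ • ∑ i ∈ Finset.range p,
              (↑(Y' ^ ((1 + i : ℕ) - (p : ℤ))) : A) * e * (↑(Y ^ (-((1 + i : ℕ) : ℤ))) : A) := by
    intro p
    induction p with
    | zero => simp
    | succ p ih =>
      have hYsplit : (Y ^ (-((p+1 : ℕ) : ℤ))) = Y ^ (-(p : ℤ)) * Y⁻¹ := by
        rw [← zpow_neg_one, ← zpow_add]
        congr 1
        push_cast; ring_nf
      rw [hYsplit, Units.val_mul, ← mul_assoc, ih]
      rw [sub_mul, add_mul, smul_mul_assoc, smul_mul_assoc, Finset.sum_mul, Finset.sum_mul]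
      rw [mul_assoc (↑(Y' ^ (-(p : ℤ))) : A) _ _, key]
      rw [Finset.sum_range_succ' (fun i => (↑(Y' ^ ((1 + i : ℕ) - ((p+1 : ℕ)) : ℤ)) : A) * (↑(Y ^ (-((1 + i : ℕ) : ℤ))) : A)),
          Finset.sum_range_succ' (fun i => (↑(Y' ^ ((1 + i : ℕ) - ((p+1 : ℕ)) : ℤ)) : A) * e * (↑(Y ^ (-((1 + i : ℕ) : ℤ))) : A))]
      have e1 : ∀ i : ℕ, ((1 + i : ℕ) - (p : ℤ)) = ((1 + (i+1) : ℕ) - ((p+1 : ℕ) : ℤ)) := by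
        intro i; push_cast; ring_nf
      have e2 : ∀ i : ℕ, (↑(Y ^ (-((1 + i : ℕ) : ℤ))) : A) * ↑Y⁻¹ = ↑(Y ^ (-((1 + (i+1) : ℕ) : ℤ))) := by
        intro i
        rw [← Units.val_mul, ← zpow_neg_one, ← zpow_add]
        congr 1
        push_cast; ring_nf
      have e3 : (↑(Y' ^ (-(p : ℤ))) : A) * (↑(Y'⁻¹) * X) = ↑(Y' ^ (-((p+1 : ℕ) : ℤ))) * X := by
        rw [← mul_assoc, ← Units.val_mul, ← zpow_neg_one, ← zpow_add]
        congr 2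
        push_cast; ring_nf
      have e4 : (↑(Y' ^ (-(p : ℤ))) : A) = ↑(Y' ^ ((1 + 0 : ℕ) - ((p+1 : ℕ) : ℤ))) := by
        congr 1; push_cast; ring_nf
      have e5 : (↑(Y ^ (-((1 + 0 : ℕ) : ℤ))) : A) = ↑Y⁻¹ := by norm_num
      simp only [mul_assoc, e2]
      simp only [mul_sub, mul_add, mul_smul_comm, e3]
      simp only [← e1, e5, e4, smul_add, smul_sub]
      abel
  intro p
  rw [aux p, ← Finset.Ico_add_one_right_eq_Icc, Finset.sum_Ico_eq_sum_range, Finset.sum_Ico_eq_sum_range]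
  simp
end
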